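/- arXiv:2412.14832 — 4 statements merged into one kernel-verified Lean document; each statement's English description precedes it below -/
import Mathlib

section
/- General variance of the k-RR frequency estimator: in the k-RR frequency-estimation setting with ε > 0, finite domain X with |X| ≥ 2, p = e^ε/(|X| − 1 + e^ε), q = 1/(|X| − 1 + e^ε), and n users with values x_1, …, x_n reporting independently via k-RR, the estimator f̂_x = (c_x/n − q)/(p − q) satisfies Var[f̂_x] = (f_x · p·(1 − p) + (1 − f_x) · q·(1 − q)) / (n · (p − q)²), where f_x = |{j : x_j = x}|/n. -/
open MeasureTheory ProbabilityTheory

lemma variance_fun_add_const {Ω : Type*} [MeasurableSpace Ω] (μ : Measure Ω)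
    [IsProbabilityMeasure μ] {X : Ω → ℝ} (hX : Integrable X μ) (c : ℝ) :
    variance (fun ω => X ω + c) μ = variance X μ := by
  have h : (μ[fun ω => X ω + c]) = μ[X] + c := by
    rw [integral_add hX (integrable_const c), integral_const]
    simp
  simp only [variance, evariance, h]
  congr 1
  apply lintegral_congr
  intro ω
  have : X ω + c - (μ[X] + c) = X ω - μ[X] := by ring
  rw [this]

/-- General variance of the k-RR frequency estimator: with `p = e^ε/(|X| − 1 + e^ε)` and
`q = 1/(|X| − 1 + e^ε)`, if `n` users holding values `x_1, …, x_n` independently report via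
k-RR, then the estimator `f̂_x = (c_x/n − q)/(p − q)` satisfies
`Var[f̂_x] = (f_x·p·(1 − p) + (1 − f_x)·q·(1 − q)) / (n·(p − q)²)`,
where `f_x = |{j : x_j = x}|/n`. -/
theorem kRR_estimator_variance {X : Type*} [Fintype X] [DecidableEq X]
    [MeasurableSpace X] [MeasurableSingletonClass X]
    (ε : ℝ) (hε : 0 < ε) (hX : 2 ≤ Fintype.card X)
    (p q : ℝ)
    (hp : p = Real.exp ε / ((Fintype.card X : ℝ) - 1 + Real.exp ε))
    (hq : q = 1 / ((Fintype.card X : ℝ) - 1 + Real.exp ε))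
    (n : ℕ) (hn : 0 < n) (xs : Fin n → X)
    {Ω : Type*} [MeasurableSpace Ω] (μ : Measure Ω) [IsProbabilityMeasure μ]
    (Y : Fin n → Ω → X) (hmeas : ∀ j, Measurable (Y j))
    (hindep : iIndepFun Y μ)
    (hdist : ∀ (j : Fin n) (y : X),
      μ {ω | Y j ω = y} = ENNReal.ofReal (if y = xs j then p else q))
    (x : X)
    (fx : ℝ) (hfx : fx = ((Finset.filter (fun j => xs j = x) Finset.univ).card : ℝ) / n) :
    variance (fun ω =>
        (((Finset.filter (fun j => Y j ω = x) Finset.univ).card : ℝ) / n - q) / (p - q)) μ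
      = (fx * p * (1 - p) + (1 - fx) * q * (1 - q)) / (n * (p - q) ^ 2) := by
  -- basic positivity facts
  have hD : (0:ℝ) < (Fintype.card X : ℝ) - 1 + Real.exp ε := by
    have : (2:ℝ) ≤ (Fintype.card X : ℝ) := by exact_mod_cast hX
    have := Real.exp_pos ε
    linarith
  have hp0 : 0 ≤ p := by rw [hp]; positivity
  have hq0 : 0 ≤ q := by rw [hq]; positivity
  have hpq : q < p := by
    rw [hp, hq, div_lt_div_iff₀ hD hD]
    have h1 : (1:ℝ) < Real.exp ε := by
      rw [← Real.exp_zero]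
      exact Real.exp_lt_exp.mpr hε
    nlinarith
  have hpqne : p - q ≠ 0 := by linarith
  have hnR : (0:ℝ) < (n:ℝ) := by exact_mod_cast hn
  -- the indicator variables
  set Z : Fin n → Ω → ℝ := fun j ω => if Y j ω = x then 1 else 0 with hZ
  have hZmeas : ∀ j, Measurable (Z j) := by
    intro j
    exact Measurable.ite ((hmeas j) (MeasurableSet.singleton x)) measurable_const
      measurable_const
  have hZmem : ∀ j, MemLp (Z j) 2 μ := by
    intro j
    apply memLp_of_bounded (a := 0) (b := 1) ?_ (hZmeas j).aestronglyMeasurable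
    filter_upwards with ω
    by_cases h : Y j ω = x <;> simp [hZ, h]
  -- expectation of Z j
  set r : Fin n → ℝ := fun j => if x = xs j then p else q with hr
  have hr0 : ∀ j, 0 ≤ r j := fun j => by by_cases h : x = xs j <;> simp [hr, h, hp0, hq0]
  have hEZ : ∀ j, μ[Z j] = r j := by
    intro j
    have hset : MeasurableSet {ω | Y j ω = x} := (hmeas j) (MeasurableSet.singleton x)
    have hind : Z j = Set.indicator {ω | Y j ω = x} (fun _ => (1:ℝ)) := by
      funext ω
      by_cases h : Y j ω = x <;> simp [hZ, h, Set.indicator_apply]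
    rw [hind, integral_indicator_const (1:ℝ) hset, measureReal_def, hdist j x, smul_eq_mul, mul_one,
      ENNReal.toReal_ofReal (by by_cases h : x = xs j <;> simp [h, hp0, hq0])]
  -- variance of Z j
  have hVZ : ∀ j, variance (Z j) μ = r j * (1 - r j) := by
    intro j
    rw [variance_eq_sub (hZmem j)]
    have hsq : (Z j) ^ 2 = Z j := by
      funext ω
      by_cases h : Y j ω = x <;> simp [hZ, h]
    rw [hsq, hEZ j]
    ring
  -- sum of indicators equals the count
  have hcount : ∀ ω, ((Finset.filter (fun j => Y j ω = x) Finset.univ).card : ℝ)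
      = ∑ j, Z j ω := by
    intro ω
    rw [Finset.card_filter]
    push_cast
    simp [hZ]
  -- variance of the sum
  have hindepZ : iIndepFun Z μ := by
    have : Z = fun j => (fun y => if y = x then (1:ℝ) else 0) ∘ Y j := by
      funext j ω; simp [hZ]
    rw [this]
    exact hindep.comp _ (fun j => Measurable.ite (MeasurableSet.singleton x)
      measurable_const measurable_const)
  have hVsum : variance (fun ω => ∑ j, Z j ω) μ = ∑ j, r j * (1 - r j) := by
    have := IndepFun.variance_sum (μ := μ) (X := Z) (s := Finset.univ)
      (fun j _ => hZmem j) (fun i _ j _ hij => hindepZ.indepFun hij)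
    rw [show (fun ω => ∑ j, Z j ω) = ∑ j, Z j by funext ω; simp, this]
    exact Finset.sum_congr rfl fun j _ => hVZ j
  -- rewrite the estimator as affine function of the sum
  have hfun : (fun ω =>
        (((Finset.filter (fun j => Y j ω = x) Finset.univ).card : ℝ) / n - q) / (p - q))
      = fun ω => ((1 / (n * (p - q))) * (∑ j, Z j ω) + (-q / (p - q))) := by
    funext ω
    rw [hcount ω]
    field_simp
    ring
  rw [hfun]
  have hint : Integrable (fun ω => (1 / ((n:ℝ) * (p - q))) * (∑ j, Z j ω)) μ := by
    apply Integrable.const_mul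
    apply integrable_finset_sum
    intro j _
    exact (hZmem j).integrable one_le_two
  rw [variance_fun_add_const μ hint _, variance_const_mul, hVsum]
  -- compute the sum of variances
  have hsum : ∑ j, r j * (1 - r j)
      = ((Finset.filter (fun j => xs j = x) Finset.univ).card : ℝ) * (p * (1 - p))
        + ((n : ℝ) - (Finset.filter (fun j => xs j = x) Finset.univ).card) * (q * (1 - q)) := by
    have : ∀ j, r j * (1 - r j) = if xs j = x then p * (1 - p) else q * (1 - q) := by
      intro j
      rcases eq_or_ne (xs j) x with h | h
      · simp only [hr, if_pos h.symm, if_pos h]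
      · simp only [hr, if_neg (Ne.symm h), if_neg h]
    simp_rw [this]
    rw [Finset.sum_ite, Finset.sum_const, Finset.sum_const, Finset.filter_not,
      Finset.card_sdiff_of_subset (Finset.filter_subset _ _)]
    have hle : (Finset.filter (fun j => xs j = x) Finset.univ).card ≤ n := by
      simpa using Finset.card_filter_le Finset.univ (fun j => xs j = x)
    simp only [nsmul_eq_mul, Finset.card_univ, Fintype.card_fin]
    rw [Nat.cast_sub hle]
  rw [hsum, hfx]
  have hk : ((Finset.filter (fun j => xs j = x) Finset.univ).card : ℝ) =
    ((Finset.filter (fun j => xs j = x) Finset.univ).card : ℝ) := rfl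
  field_simp
end

section
/- The OUE mechanism satisfies ε-LDP: for ε > 0 and a finite domain X of size d, consider the mechanism that encodes input x ∈ X as the one-hot vector B ∈ {0,1}^d with B[x] = 1 and B[i] = 0 for i ≠ x, and outputs a random vector B' ∈ {0,1}^d whose coordinates are independent with Pr[B'[i] = 1] = 1/2 when B[i] = 1 and Pr[B'[i] = 1] = 1/(e^ε + 1) when B[i] = 0. Then for all inputs x₁, x₂ ∈ X and every output vector B' ∈ {0,1}^d, Pr[OUE(x₁) = B'] ≤ e^ε · Pr[OUE(x₂) = B']. -/
/-- Probability that the OUE mechanism on input `x` (one-hot encoding of `x` over the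
finite domain `X`, bitwise independent perturbation keeping the 1-bit with probability
`p = 1/2` and flipping each 0-bit to 1 with probability `q = 1/(e^ε + 1)`) outputs the
binary vector `B' : X → Bool`. -/
noncomputable def oueProb {X : Type*} [Fintype X] [DecidableEq X]
    (ε : ℝ) (x : X) (B' : X → Bool) : ℝ :=
  ∏ i : X,
    if i = x then (if B' i then (1 / 2 : ℝ) else 1 / 2)
    else (if B' i then 1 / (Real.exp ε + 1) else 1 - 1 / (Real.exp ε + 1))

lemma oueProb_nonneg {X : Type*} [Fintype X] [DecidableEq X]
    (ε : ℝ) (x : X) (B' : X → Bool) : 0 ≤ oueProb ε x B' := by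
  have hE : (0:ℝ) < Real.exp ε := Real.exp_pos ε
  apply Finset.prod_nonneg
  intro i _
  have h1 : (0:ℝ) ≤ 1 / (Real.exp ε + 1) := by positivity
  have h2 : (Real.exp ε + 1)⁻¹ ≤ 1 := inv_le_one_of_one_le₀ (by linarith)
  have h3 : (0:ℝ) ≤ (Real.exp ε + 1)⁻¹ := by positivity
  split_ifs <;> norm_num <;> linarith

/-- The OUE mechanism satisfies ε-LDP: for all inputs `x₁, x₂` and every output vector
`B' ∈ {0,1}^d`, `Pr[OUE(x₁) = B'] ≤ e^ε · Pr[OUE(x₂) = B']`. -/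
theorem oue_satisfies_LDP {X : Type*} [Fintype X] [DecidableEq X]
    (ε : ℝ) (hε : 0 < ε) (x₁ x₂ : X) (B' : X → Bool) :
    oueProb ε x₁ B' ≤ Real.exp ε * oueProb ε x₂ B' := by
  have hE : (1:ℝ) < Real.exp ε := by
    have := Real.exp_lt_exp.mpr hε; simpa using this
  rcases eq_or_ne x₁ x₂ with rfl | hne
  · nlinarith [oueProb_nonneg ε x₁ B']
  -- x₁ ≠ x₂
  set q : ℝ := 1 / (Real.exp ε + 1) with hqdef
  have hq0 : 0 < q := by positivity
  have hq1 : q ≤ 1 - q := by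
    have h : q ≤ 1/2 := one_div_le_one_div_of_le (by norm_num) (by linarith)
    linarith
  have hkey : Real.exp ε * q = 1 - q := by
    rw [hqdef]; field_simp; ring
  set f₁ : X → ℝ := fun i =>
    if i = x₁ then (if B' i then (1 / 2 : ℝ) else 1 / 2)
    else (if B' i then q else 1 - q) with hf₁
  set f₂ : X → ℝ := fun i =>
    if i = x₂ then (if B' i then (1 / 2 : ℝ) else 1 / 2)
    else (if B' i then q else 1 - q) with hf₂
  have h1 : oueProb ε x₁ B' = ∏ i, f₁ i := rfl
  have h2 : oueProb ε x₂ B' = ∏ i, f₂ i := rfl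
  rw [h1, h2]
  have hs₂ : x₂ ∈ (Finset.univ.erase x₁) := Finset.mem_erase.mpr ⟨hne.symm, Finset.mem_univ _⟩
  have split : ∀ f : X → ℝ, ∏ i, f i = f x₁ * (f x₂ * ∏ i ∈ (Finset.univ.erase x₁).erase x₂, f i) := by
    intro f
    rw [← Finset.mul_prod_erase _ f (Finset.mem_univ x₁), ← Finset.mul_prod_erase _ f hs₂]
  rw [split f₁, split f₂]
  set R : ℝ := ∏ i ∈ (Finset.univ.erase x₁).erase x₂, f₁ i with hR
  have hRe : ∏ i ∈ (Finset.univ.erase x₁).erase x₂, f₂ i = R := by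
    apply Finset.prod_congr rfl
    intro i hi
    have hi2 := Finset.mem_erase.mp hi
    have hi1 := Finset.mem_erase.mp hi2.2
    simp only [hf₁, hf₂, if_neg hi2.1, if_neg hi1.1]
  rw [hRe]
  have hR0 : 0 ≤ R := by
    apply Finset.prod_nonneg; intro i _
    simp only [hf₁]
    split_ifs <;> linarith
  have hfa : f₁ x₁ = 1/2 := by simp [hf₁]
  have hfb : f₂ x₂ = 1/2 := by simp [hf₂]
  have hfc : f₁ x₂ = if B' x₂ then q else 1 - q := by simp [hf₁, hne.symm]
  have hfd : f₂ x₁ = if B' x₁ then q else 1 - q := by simp [hf₂, hne]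
  rw [hfa, hfb, hfc, hfd]
  have hgoal : (if B' x₂ then q else 1 - q) ≤ Real.exp ε * (if B' x₁ then q else 1 - q) := by
    cases B' x₁ <;> cases B' x₂ <;> simp <;> nlinarith
  nlinarith [mul_le_mul_of_nonneg_right hgoal hR0]
end

section
/- The OLH mechanism satisfies ε-LDP: let ε > 0, let d' ≥ 2 be an integer, and let 𝓗 be a finite nonempty family of functions H : X → Fin d'. Consider the mechanism that, on input x ∈ X, samples H uniformly at random from 𝓗, applies k-RR on the domain Fin d' (with p = e^ε/(d' − 1 + e^ε), q = 1/(d' − 1 + e^ε)) to v = H(x) to obtain y, and outputs the pair (H, y). Then for all x, x' ∈ X and every output pair (H₀, y₀) ∈ 𝓗 × Fin d', Pr[OLH(x) = (H₀, y₀)] ≤ e^ε · Pr[OLH(x') = (H₀, y₀)]. -/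
/-- The OLH mechanism satisfies ε-LDP: with `p = e^ε/(d' − 1 + e^ε)` and
`q = 1/(d' − 1 + e^ε)`, the mechanism that samples a hash function `H` uniformly at random
from a finite nonempty family `𝓗` (indexed by `ι`), applies k-RR on `Fin d'` to `H(x)`, and
outputs the pair `(H, y)`, assigns to each output pair `(H₀, y₀)` the probability
`(1/|𝓗|)·(p if H₀(x) = y₀ else q)`; for all `x, x'` and every output pair, this probability
on input `x` is at most `e^ε` times that on input `x'`. -/
theorem olh_satisfies_LDP {X ι : Type*} [Fintype ι] [Nonempty ι]
    (ε : ℝ) (hε : 0 < ε) (d' : ℕ) (hd' : 2 ≤ d')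
    (Hfam : ι → X → Fin d')
    (p q : ℝ)
    (hp : p = Real.exp ε / ((d' : ℝ) - 1 + Real.exp ε))
    (hq : q = 1 / ((d' : ℝ) - 1 + Real.exp ε))
    (x x' : X) (i₀ : ι) (y₀ : Fin d') :
    (1 / (Fintype.card ι : ℝ)) * (if Hfam i₀ x = y₀ then p else q)
      ≤ Real.exp ε * ((1 / (Fintype.card ι : ℝ)) * (if Hfam i₀ x' = y₀ then p else q)) := by
  have hden : (0:ℝ) < (d' : ℝ) - 1 + Real.exp ε := by
    have : (1:ℝ) ≤ (d' : ℝ) := by exact_mod_cast Nat.one_le_of_lt hd'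
    nlinarith [Real.exp_pos ε]
  have hq0 : 0 < q := by rw [hq]; positivity
  have hp0 : 0 < p := by rw [hp]; positivity
  have he1 : (1:ℝ) ≤ Real.exp ε := Real.one_le_exp hε.le
  have hpq : p = Real.exp ε * q := by rw [hp, hq]; ring
  rw [mul_comm (Real.exp ε), mul_assoc]
  apply mul_le_mul_of_nonneg_left _ (by positivity)
  split_ifs <;> nlinarith
end

section
/- The OLH frequency estimator is unbiased: let ε > 0, d' ≥ 2, and let 𝓗 be a finite nonempty exactly universal family of hash functions X → Fin d'. Let n users hold private values x_1, …, x_n ∈ X and each independently report (H_j, y_j) produced by OLH with p = e^ε/(d' − 1 + e^ε) and q = 1/(d' − 1 + e^ε). Fix x ∈ X, let c_x = |{j : H_j(x) = y_j}| be the number of reports supporting x, and let f_x = |{j : x_j = x}|/n. Then E[(c_x/n − 1/d')/(p − 1/d')] = f_x (where p − 1/d' = (e^ε − 1)(d' − 1)/(d'·(d' − 1 + e^ε)) > 0). -/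
open MeasureTheory ProbabilityTheory

/-- The OLH frequency estimator is unbiased: let `𝓗 = {Hfam i}` (indexed by the finite
nonempty type `ι`) be an exactly universal family of hash functions `X → Fin d'`, with
`p = e^ε/(d' − 1 + e^ε)` and `q = 1/(d' − 1 + e^ε)`. Suppose `n` users holding values
`x_1, …, x_n` independently report pairs `(H_j, y_j)` produced by OLH (hash index chosen
uniformly, hash value perturbed by k-RR on `Fin d'`). Fix `x`; a report `(H_j, y_j)`
supports `x` when `H_j(x) = y_j`, `c_x` counts the supporting reports, and
`f_x = |{j : x_j = x}|/n`. Then `E[(c_x/n − 1/d')/(p − 1/d')] = f_x`. -/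
theorem olh_estimator_unbiased {X ι : Type*} [Fintype ι] [Nonempty ι] [DecidableEq X]
    [MeasurableSpace ι] [MeasurableSingletonClass ι]
    (ε : ℝ) (hε : 0 < ε) (d' : ℕ) (hd' : 2 ≤ d')
    (Hfam : ι → X → Fin d')
    (huniv : ∀ x x' : X, x ≠ x' →
      ((Finset.filter (fun i => Hfam i x = Hfam i x') Finset.univ).card : ℝ)
        = (Fintype.card ι : ℝ) / d')
    (p q : ℝ)
    (hp : p = Real.exp ε / ((d' : ℝ) - 1 + Real.exp ε))
    (hq : q = 1 / ((d' : ℝ) - 1 + Real.exp ε))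
    (n : ℕ) (hn : 0 < n) (xs : Fin n → X)
    {Ω : Type*} [MeasurableSpace Ω] (μ : Measure Ω) [IsProbabilityMeasure μ]
    (R : Fin n → Ω → ι × Fin d') (hmeas : ∀ j, Measurable (R j))
    (hindep : iIndepFun R μ)
    (hdist : ∀ (j : Fin n) (i : ι) (y : Fin d'),
      μ {ω | R j ω = (i, y)}
        = ENNReal.ofReal
            ((1 / (Fintype.card ι : ℝ)) * (if Hfam i (xs j) = y then p else q)))
    (x : X) :
    ∫ ω, (((Finset.filter (fun j => Hfam (R j ω).1 x = (R j ω).2) Finset.univ).card : ℝ) / n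
            - 1 / d') / (p - 1 / d') ∂μ
      = ((Finset.filter (fun j => xs j = x) Finset.univ).card : ℝ) / n := by
  classical
  have hexp : 1 < Real.exp ε := by
    have := Real.exp_lt_exp.mpr hε
    simpa using this
  have hd'R : (2:ℝ) ≤ (d':ℝ) := by exact_mod_cast hd'
  have hDpos : (0:ℝ) < (d':ℝ) - 1 + Real.exp ε := by nlinarith [Real.exp_pos ε]
  have hd'0 : (d':ℝ) ≠ 0 := by linarith
  have hppos : 0 < p := by rw [hp]; positivity
  have hqpos : 0 < q := by rw [hq]; positivity
  have hcι : (0:ℝ) < (Fintype.card ι : ℝ) := by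
    exact_mod_cast Fintype.card_pos
  have hcι0 : (Fintype.card ι : ℝ) ≠ 0 := ne_of_gt hcι
  have hn0 : (n:ℝ) ≠ 0 := by exact_mod_cast hn.ne'
  have hpd : 0 < p - 1 / d' := by
    have h1 : p - 1 / d' = ((d':ℝ) - 1) * (Real.exp ε - 1)
        / ((d':ℝ) * ((d':ℝ) - 1 + Real.exp ε)) := by
      rw [hp]; field_simp; ring
    rw [h1]
    apply div_pos
    · nlinarith
    · nlinarith
  have hpd0 : p - 1 / d' ≠ 0 := ne_of_gt hpd
  -- the support event for user j
  set A : Fin n → Set Ω := fun j => {ω | Hfam (R j ω).1 x = (R j ω).2} with hAdef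
  have hAmeas : ∀ j, MeasurableSet (A j) := by
    intro j
    have : A j = R j ⁻¹' {z : ι × Fin d' | Hfam z.1 x = z.2} := rfl
    rw [this]
    exact hmeas j (Set.Finite.measurableSet (Set.toFinite _))
  -- probability of each support event
  have hμA : ∀ j, (μ (A j)).toReal = if xs j = x then p else 1 / d' := by
    intro j
    set T : Finset (ι × Fin d') :=
      Finset.univ.filter (fun z : ι × Fin d' => Hfam z.1 x = z.2) with hT
    have hAU : A j = ⋃ z ∈ T, R j ⁻¹' {z} := by
      ext ω
      simp [A, hT, eq_comm]
    have hmeasure : μ (A j) = ∑ z ∈ T, μ (R j ⁻¹' {z}) := by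
      rw [hAU]
      refine measure_biUnion_finset ?_ (fun z _ => hmeas j (measurableSet_singleton z))
      intro z _ z' _ hne
      exact (Set.disjoint_singleton.mpr hne).preimage (R j)
    have hone : ∀ z : ι × Fin d', μ (R j ⁻¹' {z})
        = ENNReal.ofReal
            ((1 / (Fintype.card ι : ℝ)) * (if Hfam z.1 (xs j) = z.2 then p else q)) := by
      intro z
      have : R j ⁻¹' {z} = {ω | R j ω = (z.1, z.2)} := by ext ω; simp
      rw [this, hdist j z.1 z.2]
    have hnn : ∀ z : ι × Fin d',
        0 ≤ (1 / (Fintype.card ι : ℝ)) * (if Hfam z.1 (xs j) = z.2 then p else q) := by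
      intro z
      have : (0:ℝ) ≤ (if Hfam z.1 (xs j) = z.2 then p else q) := by
        split <;> [exact hppos.le; exact hqpos.le]
      positivity
    have hsum : μ (A j) = ENNReal.ofReal (∑ z ∈ T,
        (1 / (Fintype.card ι : ℝ)) * (if Hfam z.1 (xs j) = z.2 then p else q)) := by
      rw [hmeasure]
      simp_rw [hone]
      rw [← ENNReal.ofReal_sum_of_nonneg (fun z _ => hnn z)]
    -- evaluate the real sum
    have hsval : (∑ z ∈ T,
        (1 / (Fintype.card ι : ℝ)) * (if Hfam z.1 (xs j) = z.2 then p else q))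
        = if xs j = x then p else 1 / d' := by
      have h1 : (∑ z ∈ T,
          (1 / (Fintype.card ι : ℝ)) * (if Hfam z.1 (xs j) = z.2 then p else q))
          = ∑ i : ι, (1 / (Fintype.card ι : ℝ))
              * (if Hfam i (xs j) = Hfam i x then p else q) := by
        rw [hT, Finset.sum_filter, Fintype.sum_prod_type]
        refine Finset.sum_congr rfl (fun i _ => ?_)
        rw [Finset.sum_ite_eq (Finset.univ) (Hfam i x)
          (fun y => (1 / (Fintype.card ι : ℝ)) * (if Hfam i (xs j) = y then p else q))]
        simp
      rw [h1]
      by_cases hjx : xs j = x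
      · simp only [hjx, if_pos rfl, ↓reduceIte]
        rw [Finset.sum_const, Finset.card_univ, nsmul_eq_mul]
        field_simp
      · rw [if_neg hjx]
        have h2 : ∀ i : ι, (1 / (Fintype.card ι : ℝ))
            * (if Hfam i (xs j) = Hfam i x then p else q)
            = (1 / (Fintype.card ι : ℝ)) * q
              + (if Hfam i (xs j) = Hfam i x
                  then (1 / (Fintype.card ι : ℝ)) * (p - q) else 0) := by
          intro i; split <;> ring
        simp_rw [h2]
        rw [Finset.sum_add_distrib, Finset.sum_const, Finset.card_univ, nsmul_eq_mul,
          ← Finset.sum_filter, Finset.sum_const, nsmul_eq_mul]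
        rw [huniv (xs j) x hjx]
        rw [hp, hq]
        field_simp
        ring
    rw [hsum, hsval, ENNReal.toReal_ofReal]
    split
    · exact hppos.le
    · positivity
  -- the indicator decomposition of the count
  have hc : ∀ ω, ((Finset.filter (fun j => Hfam (R j ω).1 x = (R j ω).2)
      Finset.univ).card : ℝ) = ∑ j : Fin n, (A j).indicator (fun _ => (1:ℝ)) ω := by
    intro ω
    rw [Finset.card_filter]
    push_cast
    refine Finset.sum_congr rfl (fun j _ => ?_)
    by_cases h : Hfam (R j ω).1 x = (R j ω).2
    · simp [Set.indicator_apply, A, h]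
    · simp [Set.indicator_apply, A, h]
  have hInt : ∀ j, Integrable ((A j).indicator (fun _ => (1:ℝ))) μ :=
    fun j => (integrable_const (1:ℝ)).indicator (hAmeas j)
  -- rewrite the integrand
  have key : ∀ c a K : ℝ, K ≠ 0 → (c / n - a) / K = c * ((n:ℝ) * K)⁻¹ + (-a / K) := by
    intro c a K hK
    field_simp
    ring
  have key2 : ∀ m a K : ℝ, K ≠ 0 →
      ((n:ℝ) * a + m * K) * ((n:ℝ) * K)⁻¹ + (-a / K) = m / n := by
    intro m a K hK
    field_simp
    ring
  have hrw : ∀ ω, (((Finset.filter (fun j => Hfam (R j ω).1 x = (R j ω).2)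
        Finset.univ).card : ℝ) / n - 1 / d') / (p - 1 / d')
      = (∑ j : Fin n, (A j).indicator (fun _ => (1:ℝ)) ω)
          * ((n:ℝ) * (p - 1 / d'))⁻¹ + (-(1 / d') / (p - 1 / d')) := by
    intro ω
    rw [← hc ω]
    exact key _ _ _ hpd0
  have hint : ∫ ω, (((Finset.filter (fun j => Hfam (R j ω).1 x = (R j ω).2)
        Finset.univ).card : ℝ) / n - 1 / d') / (p - 1 / d') ∂μ
      = (∑ j : Fin n, (μ (A j)).toReal) * ((n:ℝ) * (p - 1 / d'))⁻¹
          + (-(1 / d') / (p - 1 / d')) := by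
    rw [integral_congr_ae (Filter.Eventually.of_forall hrw)]
    rw [integral_add (((integrable_finset_sum _ (fun j _ => hInt j)).mul_const _))
      (integrable_const _)]
    rw [integral_const, measureReal_def, measure_univ, ENNReal.toReal_one, one_smul]
    rw [integral_mul_const, integral_finset_sum _ (fun j _ => hInt j)]
    congr 1
    congr 1
    refine Finset.sum_congr rfl (fun j _ => ?_)
    rw [integral_indicator_const (1:ℝ) (hAmeas j), smul_eq_mul, mul_one, measureReal_def]
  rw [hint]
  simp_rw [hμA]
  -- evaluate the sum of probabilities
  have h3 : ∀ j : Fin n, (if xs j = x then p else 1 / d')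
      = 1 / d' + (if xs j = x then p - 1 / d' else 0) := by
    intro j; split <;> ring
  simp_rw [h3]
  rw [Finset.sum_add_distrib, Finset.sum_const, Finset.card_univ, Fintype.card_fin,
    nsmul_eq_mul, ← Finset.sum_filter, Finset.sum_const, nsmul_eq_mul]
  exact key2 _ _ _ hpd0
end
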